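/- Let 0 < p, θ, q ≤ ∞, α ∈ ℝ_+, β ∈ ℝ with β ≠ 0, and suppose 1/p < min(α, α+β) ≤ max(α, α+β) < r. Then there are constants C_1, C_2 > 0 such that for all ξ > 0: C_1 2^{ξ/ν} ≤ |G(Δ(ξ))| ≤ C_2 2^{ξ/ν} and C_1 2^{ξ/ν} ≤ Σ_{k∈Δ(ξ)} 2^{|k|_1} ≤ C_2 2^{ξ/ν}, where ν := α + β/d − (1/p − 1/q)_+ if β > 0 and ν := α + β − (1/p − 1/q)_+ if β < 0. -/

import Mathlib

open MeasureTheory Filter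
open scoped ENNReal Classical BigOperators

noncomputable section

namespace SparseGrid

/-- The unit cube `[0,1]^d`. -/
def cube (d : ℕ) : Set (Fin d → ℝ) := Set.univ.pi fun _ => Set.Icc (0:ℝ) 1

/-- The `L_p` quasi-norm on the unit cube. -/
def lpQ (d : ℕ) (p : ℝ≥0∞) (f : (Fin d → ℝ) → ℝ) : ℝ≥0∞ :=
  eLpNorm f p (volume.restrict (cube d))

/-- Univariate `r`-th difference applied in coordinate `i`. -/
def diffC (d r : ℕ) (i : Fin d) (h : ℝ) (f : (Fin d → ℝ) → ℝ) (x : Fin d → ℝ) : ℝ :=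
  ∑ j ∈ Finset.range (r + 1),
    (-1 : ℝ) ^ (r - j) * (r.choose j : ℝ) * f (Function.update x i (x i + j * h))

/-- The mixed `(r,e)`-th difference operator. -/
def mixDiff (d r : ℕ) (e : Finset (Fin d)) (h : Fin d → ℝ) (f : (Fin d → ℝ) → ℝ) :
    (Fin d → ℝ) → ℝ :=
  e.toList.foldr (fun i g => diffC d r i (h i) g) f

/-- The set `𝕀^d(h,e)`. -/
def cubeHE (d r : ℕ) (h : Fin d → ℝ) (e : Finset (Fin d)) : Set (Fin d → ℝ) :=
  {x | x ∈ cube d ∧ ∀ i ∈ e, x i + r * h i ∈ Set.Icc (0:ℝ) 1}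

/-- The mixed `(r,e)`-th modulus of smoothness in `L_p`. -/
def modulus (d r : ℕ) (e : Finset (Fin d)) (p : ℝ≥0∞) (f : (Fin d → ℝ) → ℝ)
    (t : Fin d → ℝ) : ℝ≥0∞ :=
  ⨆ (h : Fin d → ℝ) (_ : ∀ i ∈ e, |h i| < t i),
    eLpNorm (mixDiff d r e h f) p (volume.restrict (cubeHE d r h e))

/-- `t^e`. -/
def tE (d : ℕ) (e : Finset (Fin d)) (t : Fin d → ℝ) : Fin d → ℝ :=
  fun i => if i ∈ e then t i else 1

/-- The Besov-type quasi-seminorm `|f|_{B^Ω_{p,θ}(e)}`. -/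
def besovSemi (d r : ℕ) (p θ : ℝ≥0∞) (Ω : (Fin d → ℝ) → ℝ) (e : Finset (Fin d))
    (f : (Fin d → ℝ) → ℝ) : ℝ≥0∞ :=
  if θ = ∞ then
    ⨆ (t : Fin d → ℝ) (_ : t ∈ cube d),
      modulus d r e p f t / ENNReal.ofReal (Ω (tE d e t))
  else
    (∫⁻ t in cube d,
        (modulus d r e p f t / ENNReal.ofReal (Ω (tE d e t))) ^ θ.toReal *
          ∏ i ∈ e, ENNReal.ofReal (t i)⁻¹) ^ (1 / θ.toReal)

/-- The Besov-type quasi-norm `‖f‖_{B^Ω_{p,θ}}`. -/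
def besovNorm (d r : ℕ) (p θ : ℝ≥0∞) (Ω : (Fin d → ℝ) → ℝ)
    (f : (Fin d → ℝ) → ℝ) : ℝ≥0∞ :=
  ∑ e : Finset (Fin d), besovSemi d r p θ Ω e f

/-- The dyadic vector `2^{-k}`. -/
def dyadic (d : ℕ) (k : Fin d → ℕ) : Fin d → ℝ := fun i => ((2:ℝ) ^ (k i))⁻¹

/-- `|k|_1`. -/
def knorm1 (d : ℕ) (k : Fin d → ℕ) : ℝ := ∑ i, (k i : ℝ)

/-- `|k|_∞`. -/
def knormInf (d : ℕ) (k : Fin d → ℕ) : ℝ := ((Finset.univ.sup k : ℕ) : ℝ)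

/-- `Ω(t) = ∏ t_i^{a_i}` (mixed smoothness `a`). -/
def OmegaA (d : ℕ) (a : Fin d → ℝ) (t : Fin d → ℝ) : ℝ := ∏ i, t i ^ a i

/-- `Ω(t) = ∏ t_i^α · inf_j t_j^β` (β ≥ 0), resp. `∏ t_i^α · sup_j t_j^β` (β < 0). -/
def OmegaAB (d : ℕ) (α β : ℝ) (t : Fin d → ℝ) : ℝ :=
  if 0 ≤ β then (∏ i, t i ^ α) * ⨅ j, t j ^ β
  else (∏ i, t i ^ α) * ⨆ j, t j ^ β

/-- The centered cardinal B-spline of order `r` (`r`-fold convolution of the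
indicator of `[-1/2,1/2]`). -/
def centerB : ℕ → ℝ → ℝ
  | 0, _ => 0
  | 1, x => if -(1/2 : ℝ) ≤ x ∧ x < 1/2 then 1 else 0
  | (n + 2), x => ∫ y in (-(1/2) : ℝ)..(1/2 : ℝ), centerB (n + 1) (x - y)

/-- The `d`-variate B-spline `M^{(r)}_{k,s}` (integer translated dilations if `r` is even,
half-integer if `r` is odd). -/
def Mrks (d r : ℕ) (k : Fin d → ℕ) (s : Fin d → ℤ) (x : Fin d → ℝ) : ℝ :=
  ∏ i, centerB r ((2:ℝ) ^ (k i) * x i - (if Even r then (s i : ℝ) else (s i : ℝ) / 2))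

/-- `J_r^d(k)`: the set of `s` for which `M^{(r)}_{k,s}` does not vanish identically
on the cube. -/
def Jrd (d r : ℕ) (k : Fin d → ℕ) : Set (Fin d → ℤ) :=
  {s | ¬ ∀ x ∈ cube d, Mrks d r k s x = 0}

/-- `Σ_r^d(k)`: the span of the B-splines `M^{(r)}_{k,s}`, `s ∈ J_r^d(k)`. -/
def SigmaRd (d r : ℕ) (k : Fin d → ℕ) : Submodule ℝ ((Fin d → ℝ) → ℝ) :=
  Submodule.span ℝ (Mrks d r k '' Jrd d r k)

/-- The quasi-interpolation operator `Q(f,x) = ∑_s Λ(f,s) M(x-s)` on `ℝ`. -/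
def Qop (r m : ℕ) (lam : ℤ → ℝ) (f : ℝ → ℝ) (x : ℝ) : ℝ :=
  ∑' s : ℤ,
    (∑ j ∈ Finset.Icc (-(m:ℤ)) (m:ℤ), lam j * f ((s - j : ℤ) : ℝ)) * centerB r (x - (s:ℝ))

/-- `Q` is a quasi-interpolation operator: `lam` is even, supported in `|j| ≤ m`,
`m ≥ r/2 - 1`, and `Q` reproduces polynomials of degree at most `r-1`. -/
def QuasiInterp (r m : ℕ) (lam : ℤ → ℝ) : Prop :=
  (∀ j : ℤ, lam (-j) = lam j) ∧
  (∀ j : ℤ, (m : ℤ) < |j| → lam j = 0) ∧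
  ((r : ℝ) / 2 - 1 ≤ m) ∧
  (∀ P : Polynomial ℝ, P.natDegree < r →
    ∀ x : ℝ, Qop r m lam (fun y => Polynomial.eval y P) x = Polynomial.eval x P)

/-- The Lagrange extension `f̄_k` of a function on `[0,1]` to `ℝ`. -/
def extendF (r k : ℕ) (f : ℝ → ℝ) (x : ℝ) : ℝ :=
  if x < 0 then
    Polynomial.eval x (Lagrange.interpolate (Finset.range r) (fun j => (j : ℝ) / 2 ^ k)
      (fun j => f ((j : ℝ) / 2 ^ k)))
  else if x ≤ 1 then f x
  else
    Polynomial.eval x (Lagrange.interpolate (Finset.range r)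
      (fun j => ((2 ^ k : ℝ) - r + 1 + j) / 2 ^ k)
      (fun j => f (((2 ^ k : ℝ) - r + 1 + j) / 2 ^ k)))

/-- The coefficient functional `a_{k,s}(f)`. -/
def aks (r m : ℕ) (lam : ℤ → ℝ) (k : ℕ) (f : ℝ → ℝ) (s : ℤ) : ℝ :=
  ∑ j ∈ Finset.Icc (-(m:ℤ)) (m:ℤ), lam j * extendF r k f (((s - j : ℤ) : ℝ) / 2 ^ k)

/-- The boundary-corrected dyadic quasi-interpolation operator `Q_k` on `[0,1]`. -/
def Qb (r m : ℕ) (lam : ℤ → ℝ) (k : ℕ) (f : ℝ → ℝ) (x : ℝ) : ℝ :=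
  ∑' s : ℤ,
    if -(r : ℤ) < 2 * s ∧ 2 * s < 2 ^ (k + 1) + r then
      aks r m lam k f s * centerB r ((2:ℝ) ^ k * x - (s : ℝ))
    else 0

/-- `Q_k` applied in coordinate `i`. -/
def QbC (d r m : ℕ) (lam : ℤ → ℝ) (i : Fin d) (k : ℕ) (f : (Fin d → ℝ) → ℝ)
    (x : Fin d → ℝ) : ℝ :=
  Qb r m lam k (fun y => f (Function.update x i y)) (x i)

/-- `Q_k - Q_{k-1}` applied in coordinate `i` (with `Q_{-1} = 0`). -/
def qbDiffC (d r m : ℕ) (lam : ℤ → ℝ) (i : Fin d) (k : ℕ) (f : (Fin d → ℝ) → ℝ)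
    (x : Fin d → ℝ) : ℝ :=
  QbC d r m lam i k f x - (if k = 0 then 0 else QbC d r m lam i (k - 1) f x)

/-- The mixed operator `Q_k = ∏_i Q_{k_i}`. -/
def QMix (d r m : ℕ) (lam : ℤ → ℝ) (k : Fin d → ℕ) (f : (Fin d → ℝ) → ℝ) :
    (Fin d → ℝ) → ℝ :=
  (List.finRange d).foldr (fun i g => QbC d r m lam i (k i) g) f

/-- The mixed dyadic component `q_k = ∏_i (Q_{k_i} - Q_{k_i - 1})`. -/
def qMix (d r m : ℕ) (lam : ℤ → ℝ) (k : Fin d → ℕ) (f : (Fin d → ℝ) → ℝ) :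
    (Fin d → ℝ) → ℝ :=
  (List.finRange d).foldr (fun i g => qbDiffC d r m lam i (k i) g) f

/-- `R_Δ(f) = ∑_{k ∈ Δ} q_k(f)`. -/
def RDelta (d r m : ℕ) (lam : ℤ → ℝ) (Δ : Set (Fin d → ℕ)) (f : (Fin d → ℝ) → ℝ)
    (x : Fin d → ℝ) : ℝ :=
  ∑' k : Δ, qMix d r m lam k f x

/-- Convergence of the series `∑_{k ∈ ℤ_+^d} F_k` to `g` in the norm of `L_∞(𝕀^d)`. -/
def ConvLinf (d : ℕ) (F : (Fin d → ℕ) → (Fin d → ℝ) → ℝ) (g : (Fin d → ℝ) → ℝ) : Prop :=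
  Tendsto (fun Δ : Finset (Fin d → ℕ) =>
      eLpNorm (fun x => g x - ∑ k ∈ Δ, F k x) ∞ (volume.restrict (cube d)))
    atTop (nhds 0)

/-- The quantity `B_4({g_k}) = (∑_k {‖g_k‖_p / Ω(2^{-k})}^θ)^{1/θ}`. -/
def B4seq (d : ℕ) (p θ : ℝ≥0∞) (Ω : (Fin d → ℝ) → ℝ)
    (gk : (Fin d → ℕ) → (Fin d → ℝ) → ℝ) : ℝ≥0∞ :=
  if θ = ∞ then ⨆ k : Fin d → ℕ, lpQ d p (gk k) / ENNReal.ofReal (Ω (dyadic d k))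
  else (∑' k : Fin d → ℕ,
      (lpQ d p (gk k) / ENNReal.ofReal (Ω (dyadic d k))) ^ θ.toReal) ^ (1 / θ.toReal)

/-- The quantity `B_2(f) = (∑_k {‖q_k(f)‖_p / Ω(2^{-k})}^θ)^{1/θ}`. -/
def B2 (d r m : ℕ) (lam : ℤ → ℝ) (p θ : ℝ≥0∞) (Ω : (Fin d → ℝ) → ℝ)
    (f : (Fin d → ℝ) → ℝ) : ℝ≥0∞ :=
  B4seq d p θ Ω (fun k => qMix d r m lam k f)

/-- The quasi-norm `‖f‖_{B^ψ_{p,θ}} = (∑_k (2^{ψ(k)} ‖q_k f‖_p)^θ)^{1/θ}`. -/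
def bpsiNorm (d r m : ℕ) (lam : ℤ → ℝ) (ψ : (Fin d → ℕ) → ℝ) (p θ : ℝ≥0∞)
    (f : (Fin d → ℝ) → ℝ) : ℝ≥0∞ :=
  if θ = ∞ then
    ⨆ k : Fin d → ℕ, ENNReal.ofReal ((2:ℝ) ^ (ψ k)) * lpQ d p (qMix d r m lam k f)
  else (∑' k : Fin d → ℕ,
      (ENNReal.ofReal ((2:ℝ) ^ (ψ k)) * lpQ d p (qMix d r m lam k f)) ^ θ.toReal) ^
    (1 / θ.toReal)

/-- `I^d(k) = {s ∈ ℤ_+^d : 0 ≤ s_i ≤ 2^{k_i}}`. -/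
def IdkF (d : ℕ) (k : Fin d → ℕ) : Finset (Fin d → ℕ) :=
  Fintype.piFinset fun i => Finset.range (2 ^ (k i) + 1)

/-- The dyadic grid point `2^{-k} s`. -/
def gridPt (d : ℕ) (k : Fin d → ℕ) (s : Fin d → ℕ) : Fin d → ℝ :=
  fun i => (s i : ℝ) / 2 ^ (k i)

/-- `|G(Δ)| = ∑_{k ∈ Δ} ∏_j (2^{k_j} + 1)`, counted with multiplicity. -/
def gridSizeE (d : ℕ) (Δ : Set (Fin d → ℕ)) : ℝ≥0∞ :=
  ∑' k : Δ, ∏ i, ((2:ℝ≥0∞) ^ ((k : Fin d → ℕ) i) + 1)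

/-- `∑_{k ∈ Δ} 2^{|k|_1}`. -/
def sum2E (d : ℕ) (Δ : Set (Fin d → ℕ)) : ℝ≥0∞ :=
  ∑' k : Δ, (2:ℝ≥0∞) ^ (∑ i, (k : Fin d → ℕ) i)

/-- The set `A` of triples `(p,θ,q)`. -/
def tripleA (p θ q : ℝ≥0∞) : Prop :=
  (q ≤ p ∧ θ ≤ min q 1) ∨ (p < q ∧ q < ∞ ∧ θ ≤ q) ∨ (p < q ∧ q = ∞ ∧ θ ≤ 1)

/-- `(1/p - 1/q)_+`. -/
def rhoPQ (p q : ℝ≥0∞) : ℝ := max 0 (p⁻¹.toReal - q⁻¹.toReal)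

/-- The sparse index set `Δ(ξ)` for the classes `U^{α,β}_{p,θ}`. -/
def DeltaAB (d : ℕ) (p θ q : ℝ≥0∞) (α β ε : ℝ) (ξ : ℝ) : Set (Fin d → ℕ) :=
  if tripleA p θ q then
    {k | (α - rhoPQ p q) * knorm1 d k + β * knormInf d k ≤ ξ}
  else if 0 < β then
    {k | (α - rhoPQ p q + ε / d) * knorm1 d k + (β - ε) * knormInf d k ≤ ξ}
  else
    {k | (α - rhoPQ p q - ε) * knorm1 d k + (β + ε) * knormInf d k ≤ ξ}

/-- The sparse index set `Δ'(ξ)` for the classes `U^a_{p,θ}`. -/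
def DeltaA (d : ℕ) (p θ q : ℝ≥0∞) (a : Fin d → ℝ) (ε : ℝ) (ξ : ℝ) : Set (Fin d → ℕ) :=
  if tripleA p θ q then
    {k | (∑ i, a i * (k i : ℝ)) - rhoPQ p q * knorm1 d k ≤ ξ}
  else
    {k | (∑ i : Fin d, (if i.val = 0 then a i else a i - ε) * (k i : ℝ))
          - rhoPQ p q * knorm1 d k ≤ ξ}

/-- The sparse index set `Δ''(ξ)` for recovery in the energy norm. -/
def DeltaG (d : ℕ) (p q θ τ : ℝ≥0∞) (α β γ ε : ℝ) (ξ : ℝ) : Set (Fin d → ℕ) :=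
  if θ ≤ min τ 1 then
    {k | (α - rhoPQ p q) * knorm1 d k - (γ - β) * knormInf d k ≤ ξ}
  else if γ < β then
    {k | (α - rhoPQ p q + ε / d) * knorm1 d k - (γ - β - ε) * knormInf d k ≤ ξ}
  else
    {k | (α - rhoPQ p q - ε) * knorm1 d k - (γ - β + ε) * knormInf d k ≤ ξ}

/-- The unit ball of `B^Ω_{p,θ}` (of continuous functions). -/
def Uball (d r : ℕ) (p θ : ℝ≥0∞) (Ω : (Fin d → ℝ) → ℝ) : Set ((Fin d → ℝ) → ℝ) :=
  {f | ContinuousOn f (cube d) ∧ besovNorm d r p θ Ω f ≤ 1}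

/-- The quantity `r_n(W, ·)` of optimal linear sampling recovery. -/
def rW (d n : ℕ) (W : Set ((Fin d → ℝ) → ℝ)) (nrm : ((Fin d → ℝ) → ℝ) → ℝ≥0∞) : ℝ≥0∞ :=
  ⨅ (X : Fin n → Fin d → ℝ) (_ : ∀ j, X j ∈ cube d) (Φ : Fin n → (Fin d → ℝ) → ℝ),
    ⨆ f ∈ W, nrm (fun x => f x - ∑ j, f (X j) * Φ j x)

/-- The quantity `ϱ_n(W, ·)` of optimal (nonlinear) sampling recovery. -/
def rhoW (d n : ℕ) (W : Set ((Fin d → ℝ) → ℝ)) (nrm : ((Fin d → ℝ) → ℝ) → ℝ≥0∞) : ℝ≥0∞ :=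
  ⨅ (X : Fin n → Fin d → ℝ) (_ : ∀ j, X j ∈ cube d) (P : (Fin n → ℝ) → (Fin d → ℝ) → ℝ),
    ⨆ f ∈ W, nrm (fun x => f x - P (fun j => f (X j)) x)

/-- The quantity `i_n(W)` of optimal cubature. -/
def iW (d n : ℕ) (W : Set ((Fin d → ℝ) → ℝ)) : ℝ≥0∞ :=
  ⨅ (X : Fin n → Fin d → ℝ) (_ : ∀ j, X j ∈ cube d) (Λ : Fin n → ℝ),
    ⨆ f ∈ W, ENNReal.ofReal |(∫ x in cube d, f x) - ∑ j, Λ j * f (X j)|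

/-- `R_Δ` is a linear sampling algorithm on the grid `G(Δ)`. -/
def IsSamplingAlg (d r m : ℕ) (lam : ℤ → ℝ) (Δ : Set (Fin d → ℕ)) : Prop :=
  ∃ ψ : (Fin d → ℕ) → (Fin d → ℕ) → (Fin d → ℝ) → ℝ,
    ∀ f : (Fin d → ℝ) → ℝ, ContinuousOn f (cube d) → ∀ x ∈ cube d,
      RDelta d r m lam Δ f x =
        ∑' k : Δ, ∑ s ∈ IdkF d (k : Fin d → ℕ), f (gridPt d (k : Fin d → ℕ) s) * ψ k s x

/-- The discrete quasi-norm `B_1(f)`. -/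
def B1 (d r : ℕ) (p θ : ℝ≥0∞) (Ω : (Fin d → ℝ) → ℝ) (f : (Fin d → ℝ) → ℝ) : ℝ≥0∞ :=
  ∑ e : Finset (Fin d),
    if θ = ∞ then
      ⨆ (k : Fin d → ℕ) (_ : ∀ i ∉ e, k i = 0),
        modulus d r e p f (dyadic d k) / ENNReal.ofReal (Ω (dyadic d k))
    else
      (∑' k : Fin d → ℕ,
          if ∀ i ∉ e, k i = 0 then
            (modulus d r e p f (dyadic d k) / ENNReal.ofReal (Ω (dyadic d k))) ^ θ.toReal
          else 0) ^ (1 / θ.toReal)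

end SparseGrid


section Stmt13Aux
open SparseGrid

lemma st13_two_ne_top : (2:ℝ≥0∞) ≠ ∞ := by simp

/-- cutoff geometric sum, real exponents -/
lemma st13_aux_cutoff (b x : ℝ) (hb : 0 < b) :
    ∑' m : ℕ, (if (m : ℝ) ≤ x then (2:ℝ≥0∞) ^ (b * (m:ℝ)) else 0)
      ≤ (2:ℝ≥0∞) ^ (b * x) * (1 - (2:ℝ≥0∞) ^ (-b))⁻¹ := by
  rcases lt_or_ge x 0 with hx | hx
  · have h0 : ∀ m : ℕ, (if (m:ℝ) ≤ x then (2:ℝ≥0∞) ^ (b * (m:ℝ)) else 0) = 0 := by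
      intro m
      rw [if_neg]
      intro h
      exact absurd (le_trans (Nat.cast_nonneg m) h) (not_le.mpr hx)
    simp only [h0, tsum_zero]
    exact zero_le'
  · set N := ⌊x⌋₊ with hN
    set r : ℝ≥0∞ := (2:ℝ≥0∞) ^ (-b) with hr
    have key : ∀ m : ℕ, (if (m:ℝ) ≤ x then (2:ℝ≥0∞) ^ (b * (m:ℝ)) else 0)
        ≤ (2:ℝ≥0∞) ^ (b * x) * (if m ≤ N then r ^ (N - m) else 0) := by
      intro m
      by_cases hm : (m:ℝ) ≤ x
      · have hmN : m ≤ N := Nat.le_floor hm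
        rw [if_pos hm, if_pos hmN]
        have hcast : ((N - m : ℕ) : ℝ) = (N:ℝ) - m := Nat.cast_sub hmN
        have heq : (2:ℝ≥0∞) ^ (b * x) * r ^ (N - m)
            = (2:ℝ≥0∞) ^ (b * x + (-b) * ((N - m : ℕ) : ℝ)) := by
          rw [hr, ← ENNReal.rpow_natCast ((2:ℝ≥0∞) ^ (-b)) (N - m),
            ← ENNReal.rpow_mul, ← ENNReal.rpow_add _ _ two_ne_zero st13_two_ne_top]
        rw [heq]
        apply ENNReal.rpow_le_rpow_of_exponent_le one_le_two
        have hfl : (N : ℝ) ≤ x := Nat.floor_le hx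
        rw [hcast]
        nlinarith
      · rw [if_neg hm]
        exact zero_le'
    calc ∑' m : ℕ, (if (m:ℝ) ≤ x then (2:ℝ≥0∞) ^ (b * (m:ℝ)) else 0)
        ≤ ∑' m : ℕ, (2:ℝ≥0∞) ^ (b * x) * (if m ≤ N then r ^ (N - m) else 0) :=
          ENNReal.tsum_le_tsum key
      _ = (2:ℝ≥0∞) ^ (b * x) * ∑' m : ℕ, (if m ≤ N then r ^ (N - m) else 0) :=
          ENNReal.tsum_mul_left
      _ ≤ (2:ℝ≥0∞) ^ (b * x) * (1 - r)⁻¹ := by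
          gcongr
          have hsum : ∑' m : ℕ, (if m ≤ N then r ^ (N - m) else 0)
              = ∑ m ∈ Finset.range (N+1), r ^ (N - m) := by
            rw [tsum_eq_sum (s := Finset.range (N+1))]
            · apply Finset.sum_congr rfl
              intro m hm
              rw [if_pos (Nat.lt_succ_iff.mp (Finset.mem_range.mp hm))]
            · intro m hm
              rw [if_neg]
              exact fun h => hm (Finset.mem_range.mpr (Nat.lt_succ_iff.mpr h))
          rw [hsum]
          have hrefl := Finset.sum_range_reflect (fun j => r ^ j) (N+1)
          simp only [Nat.add_sub_cancel] at hrefl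
          rw [hrefl, ← ENNReal.tsum_geometric r]
          exact ENNReal.sum_le_tsum _

/-- product of geometric series over a pi type -/
lemma st13_pi_geom (d : ℕ) (q : ℝ≥0∞) :
    ∑' t : Fin d → ℕ, q ^ (∑ i, t i) = ((1 - q)⁻¹) ^ d := by
  induction d with
  | zero =>
      rw [tsum_eq_single (fun _ => 0)]
      · simp
      · intro t ht; exact absurd (funext fun i => absurd i.2 (by omega)) ht
  | succ n ih =>
      rw [← Equiv.tsum_eq (Fin.consEquiv (fun _ => ℕ)) (fun t => q ^ (∑ i, t i))]
      have hterm : ∀ p : ℕ × (Fin n → ℕ),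
          q ^ (∑ i, ((Fin.consEquiv (fun _ => ℕ)) p) i) = q ^ p.1 * q ^ (∑ i, p.2 i) := by
        intro p
        rw [← pow_add]
        congr 1
        rw [Fin.sum_univ_succ]
        simp [Fin.consEquiv]
      rw [tsum_congr hterm,
        ENNReal.tsum_prod (f := fun (a : ℕ) (t : Fin n → ℕ) => q ^ a * q ^ (∑ i, t i))]
      simp only [ENNReal.tsum_mul_left]
      rw [ENNReal.tsum_mul_right, ih, ENNReal.tsum_geometric, pow_succ]
      ring

lemma st13_upper_core (d : ℕ) (w : ℕ) (hw : 0 < w) (c e ρ : ℝ) (hc : 0 < c) (hρ : 0 ≤ ρ)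
    (ξ : ℝ) :
    ∑' p : (Fin d) × ((Fin d → ℕ) × ℕ),
      (if c * (p.2.2 : ℝ) ≤ ξ + e * (∑ i, (p.2.1 i : ℝ)) then
        (2:ℝ≥0∞) ^ (w * p.2.2) * (ENNReal.ofReal ρ) ^ (∑ i, p.2.1 i) else 0)
      ≤ ((d : ℝ≥0∞) * ((1 - (2:ℝ≥0∞) ^ (-(w:ℝ)))⁻¹ *
          ((1 - ENNReal.ofReal (ρ * (2:ℝ) ^ ((w * e) / c)))⁻¹) ^ d))
        * (2:ℝ≥0∞) ^ ((w / c) * ξ) := by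
  set q : ℝ≥0∞ := ENNReal.ofReal (ρ * (2:ℝ) ^ ((w * e) / c)) with hqdef
  set C0 : ℝ≥0∞ := (1 - (2:ℝ≥0∞) ^ (-(w:ℝ)))⁻¹ with hC0
  have hq2 : ENNReal.ofReal ρ * (2:ℝ≥0∞) ^ ((w * e) / c) = q := by
    rw [hqdef, ENNReal.ofReal_mul hρ, ← ENNReal.ofReal_rpow_of_pos two_pos,
      ← ENNReal.ofReal_ofNat 2]
  have hinner : ∀ t : Fin d → ℕ,
      ∑' m : ℕ, (if c * (m : ℝ) ≤ ξ + e * (∑ i, (t i : ℝ)) then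
          (2:ℝ≥0∞) ^ (w * m) * (ENNReal.ofReal ρ) ^ (∑ i, t i) else 0)
      ≤ (C0 * (2:ℝ≥0∞) ^ ((w / c) * ξ)) * q ^ (∑ i, t i) := by
    intro t
    set T : ℝ := ∑ i, (t i : ℝ) with hT
    set Tn : ℕ := ∑ i, t i with hTn
    have hTT : T = (Tn : ℝ) := by rw [hT, hTn]; push_cast; rfl
    have h1 : ∀ m : ℕ, (if c * (m : ℝ) ≤ ξ + e * T then
          (2:ℝ≥0∞) ^ (w * m) * (ENNReal.ofReal ρ) ^ Tn else 0)
        = (ENNReal.ofReal ρ) ^ Tn *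
          (if (m:ℝ) ≤ (ξ + e * T) / c then (2:ℝ≥0∞) ^ ((w:ℝ) * (m:ℝ)) else 0) := by
      intro m
      have hcond : (c * (m : ℝ) ≤ ξ + e * T) ↔ ((m:ℝ) ≤ (ξ + e * T) / c) := by
        rw [le_div_iff₀ hc]; constructor <;> intro h <;> linarith
      have hpow : (2:ℝ≥0∞) ^ (w * m) = (2:ℝ≥0∞) ^ ((w:ℝ) * (m:ℝ)) := by
        rw [← ENNReal.rpow_natCast (2:ℝ≥0∞) (w * m)]
        push_cast
        rfl
      by_cases hm : c * (m:ℝ) ≤ ξ + e * T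
      · rw [if_pos hm, if_pos (hcond.mp hm), hpow, mul_comm]
      · rw [if_neg hm, if_neg (fun h => hm (hcond.mpr h)), mul_zero]
    calc ∑' m : ℕ, (if c * (m : ℝ) ≤ ξ + e * T then
            (2:ℝ≥0∞) ^ (w * m) * (ENNReal.ofReal ρ) ^ Tn else 0)
        = (ENNReal.ofReal ρ) ^ Tn *
          ∑' m : ℕ, (if (m:ℝ) ≤ (ξ + e * T) / c then (2:ℝ≥0∞) ^ ((w:ℝ) * (m:ℝ)) else 0) := by
          rw [tsum_congr h1, ENNReal.tsum_mul_left]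
      _ ≤ (ENNReal.ofReal ρ) ^ Tn * ((2:ℝ≥0∞) ^ ((w:ℝ) * ((ξ + e * T) / c)) * C0) := by
          gcongr
          exact st13_aux_cutoff (w:ℝ) _ (by exact_mod_cast hw)
      _ = (C0 * (2:ℝ≥0∞) ^ ((w / c) * ξ)) * q ^ Tn := by
          have hexp : (w:ℝ) * ((ξ + e * T) / c) = (w / c) * ξ + ((w * e) / c) * T := by
            field_simp
          rw [hexp, ENNReal.rpow_add _ _ two_ne_zero st13_two_ne_top]
          have h3 : (2:ℝ≥0∞) ^ (((w * e) / c) * T) = ((2:ℝ≥0∞) ^ ((w * e) / c)) ^ Tn := by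
            rw [ENNReal.rpow_mul, hTT, ENNReal.rpow_natCast]
          rw [h3, ← hq2, mul_pow]
          ring
  have houter : ∀ _i : Fin d,
      ∑' tm : (Fin d → ℕ) × ℕ,
        (if c * (tm.2 : ℝ) ≤ ξ + e * (∑ j, (tm.1 j : ℝ)) then
          (2:ℝ≥0∞) ^ (w * tm.2) * (ENNReal.ofReal ρ) ^ (∑ j, tm.1 j) else 0)
      ≤ (C0 * ((1 - q)⁻¹) ^ d) * (2:ℝ≥0∞) ^ ((w / c) * ξ) := by
    intro i
    rw [ENNReal.tsum_prod (f := fun (t : Fin d → ℕ) (m : ℕ) =>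
      (if c * (m : ℝ) ≤ ξ + e * (∑ j, (t j : ℝ)) then
        (2:ℝ≥0∞) ^ (w * m) * (ENNReal.ofReal ρ) ^ (∑ j, t j) else 0))]
    calc ∑' t : Fin d → ℕ, ∑' m : ℕ,
          (if c * (m : ℝ) ≤ ξ + e * (∑ j, (t j : ℝ)) then
            (2:ℝ≥0∞) ^ (w * m) * (ENNReal.ofReal ρ) ^ (∑ j, t j) else 0)
        ≤ ∑' t : Fin d → ℕ, (C0 * (2:ℝ≥0∞) ^ ((w / c) * ξ)) * q ^ (∑ j, t j) :=
          ENNReal.tsum_le_tsum (fun t => hinner t)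
      _ = (C0 * (2:ℝ≥0∞) ^ ((w / c) * ξ)) * ((1 - q)⁻¹) ^ d := by
          rw [ENNReal.tsum_mul_left, st13_pi_geom]
      _ = (C0 * ((1 - q)⁻¹) ^ d) * (2:ℝ≥0∞) ^ ((w / c) * ξ) := by ring
  calc ∑' p : (Fin d) × ((Fin d → ℕ) × ℕ),
        (if c * (p.2.2 : ℝ) ≤ ξ + e * (∑ i, (p.2.1 i : ℝ)) then
          (2:ℝ≥0∞) ^ (w * p.2.2) * (ENNReal.ofReal ρ) ^ (∑ i, p.2.1 i) else 0)
      = ∑' i : Fin d, ∑' tm : (Fin d → ℕ) × ℕ,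
          (if c * (tm.2 : ℝ) ≤ ξ + e * (∑ j, (tm.1 j : ℝ)) then
            (2:ℝ≥0∞) ^ (w * tm.2) * (ENNReal.ofReal ρ) ^ (∑ j, tm.1 j) else 0) :=
        ENNReal.tsum_prod (f := fun (_i : Fin d) (tm : (Fin d → ℕ) × ℕ) =>
          (if c * (tm.2 : ℝ) ≤ ξ + e * (∑ j, (tm.1 j : ℝ)) then
            (2:ℝ≥0∞) ^ (w * tm.2) * (ENNReal.ofReal ρ) ^ (∑ j, tm.1 j) else 0))
    _ ≤ ∑' _i : Fin d, (C0 * ((1 - q)⁻¹) ^ d) * (2:ℝ≥0∞) ^ ((w / c) * ξ) :=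
        ENNReal.tsum_le_tsum houter
    _ = ((d : ℝ≥0∞) * (C0 * ((1 - q)⁻¹) ^ d)) * (2:ℝ≥0∞) ^ ((w / c) * ξ) := by
        rw [tsum_fintype]
        simp only [Finset.sum_const, Finset.card_univ, Fintype.card_fin, nsmul_eq_mul]
        ring
    _ = ((d : ℝ≥0∞) * ((1 - (2:ℝ≥0∞) ^ (-(w:ℝ)))⁻¹ * ((1 - q)⁻¹) ^ d))
        * (2:ℝ≥0∞) ^ ((w / c) * ξ) := by rw [hC0]

lemma st13_upper_pos (d : ℕ) (hd : 0 < d) (A B ν : ℝ) (hA : 0 < A) (hB : 0 < B)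
    (hν : ν = A + B / d) :
    ∃ K : ℝ≥0∞, K ≠ ∞ ∧ ∀ ξ : ℝ,
      sum2E d {k | A * knorm1 d k + B * knormInf d k ≤ ξ}
        ≤ K * (2:ℝ≥0∞) ^ (ξ / ν) := by
  have hd0 : (0:ℝ) < d := by exact_mod_cast hd
  have hν0 : 0 < ν := by rw [hν]; positivity
  have hAν : A < ν := by
    rw [hν]
    have : 0 < B / d := div_pos hB hd0
    linarith
  have hqlt : (1/2 : ℝ) * (2:ℝ) ^ (((d:ℕ):ℝ) * A / ((d:ℝ) * ν)) < 1 := by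
    rw [mul_div_mul_left _ _ (ne_of_gt hd0)]
    have h2 : (2:ℝ) ^ (A / ν) < 2 ^ (1:ℝ) := by
      apply Real.rpow_lt_rpow_of_exponent_lt one_lt_two
      rw [div_lt_one hν0]; exact hAν
    rw [Real.rpow_one] at h2
    linarith
  set K : ℝ≥0∞ := (d : ℝ≥0∞) * ((1 - (2:ℝ≥0∞) ^ (-((d:ℕ):ℝ)))⁻¹ *
      ((1 - ENNReal.ofReal ((1/2 : ℝ) * (2:ℝ) ^ (((d:ℕ):ℝ) * A / ((d:ℝ) * ν))))⁻¹) ^ d)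
    with hK
  have hKtop : K ≠ ∞ := by
    rw [hK]
    apply ENNReal.mul_ne_top (ENNReal.natCast_ne_top d)
    apply ENNReal.mul_ne_top
    · rw [ENNReal.inv_ne_top]
      have hlt : (2:ℝ≥0∞) ^ (-((d:ℕ):ℝ)) < 1 := by
        apply ENNReal.rpow_lt_one_of_one_lt_of_neg ENNReal.one_lt_two
        simp only [neg_neg, Left.neg_neg_iff]
        exact_mod_cast hd
      exact (tsub_pos_of_lt hlt).ne'
    · apply ENNReal.pow_ne_top
      rw [ENNReal.inv_ne_top]
      have hlt : ENNReal.ofReal ((1/2 : ℝ) * (2:ℝ) ^ (((d:ℕ):ℝ) * A / ((d:ℝ) * ν))) < 1 :=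
        ENNReal.ofReal_lt_one.mpr hqlt
      exact (tsub_pos_of_lt hlt).ne'
  refine ⟨K, hKtop, ?_⟩
  intro ξ
  have hcore := st13_upper_core d d hd ((d:ℝ) * ν) A (1/2)
    (by positivity) (by norm_num) ξ
  have hxx : (((d:ℕ):ℝ) / ((d:ℝ) * ν)) * ξ = ξ / ν := by
    field_simp
  rw [hxx] at hcore
  refine le_trans ?_ hcore
  -- injection
  have hmax : ∀ k : Fin d → ℕ, ∃ i : Fin d, k i = Finset.univ.sup k := by
    intro k
    have hne : (Finset.univ : Finset (Fin d)).Nonempty := by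
      have : Nonempty (Fin d) := ⟨⟨0, hd⟩⟩
      exact Finset.univ_nonempty
    obtain ⟨i, _, hi⟩ := Finset.exists_mem_eq_sup Finset.univ hne k
    exact ⟨i, hi.symm⟩
  set ix : (Fin d → ℕ) → Fin d := fun k => Classical.choose (hmax k) with hix
  have hixs : ∀ k, k (ix k) = Finset.univ.sup k := fun k => Classical.choose_spec (hmax k)
  have hle : ∀ (k : Fin d → ℕ) (j : Fin d), k j ≤ k (ix k) := by
    intro k j; rw [hixs k]; exact Finset.le_sup (Finset.mem_univ j)
  set g : (Fin d) × ((Fin d → ℕ) × ℕ) → ℝ≥0∞ := fun p =>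
    (if ((d:ℝ) * ν) * (p.2.2 : ℝ) ≤ ξ + A * (∑ i, (p.2.1 i : ℝ)) then
        (2:ℝ≥0∞) ^ (d * p.2.2) * (ENNReal.ofReal (1/2 : ℝ)) ^ (∑ i, p.2.1 i) else 0)
    with hg
  set Ψ : {k : Fin d → ℕ | A * knorm1 d k + B * knormInf d k ≤ ξ}
      → (Fin d) × ((Fin d → ℕ) × ℕ) :=
    fun x => (ix x.1, (fun j => x.1 (ix x.1) - x.1 j, x.1 (ix x.1))) with hΨ
  have hinj : Function.Injective Ψ := by
    intro x y hxy
    have h1 : x.1 (ix x.1) = y.1 (ix y.1) := congrArg (fun p => p.2.2) hxy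
    have h2 : ∀ j, x.1 (ix x.1) - x.1 j = y.1 (ix y.1) - y.1 j :=
      fun j => congrFun (congrArg (fun p => p.2.1) hxy) j
    apply Subtype.ext
    funext j
    have hx' := Nat.sub_sub_self (hle x.1 j)
    have hy' := Nat.sub_sub_self (hle y.1 j)
    rw [← hx', ← hy', h2 j, h1]
  have hterm : ∀ x : {k : Fin d → ℕ | A * knorm1 d k + B * knormInf d k ≤ ξ},
      (2:ℝ≥0∞) ^ (∑ i, (x : Fin d → ℕ) i) = g (Ψ x) := by
    rintro ⟨k, hk⟩
    simp only [hΨ, hg]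
    set m : ℕ := k (ix k) with hm
    have hsum : (∑ j, k j) + (∑ j, (m - k j)) = d * m := by
      rw [← Finset.sum_add_distrib]
      have : ∀ j : Fin d, k j + (m - k j) = m := fun j => Nat.add_sub_cancel' (hle k j)
      simp only [this, Finset.sum_const, Finset.card_univ, Fintype.card_fin, smul_eq_mul]
    have hsumR : (∑ j, ((m - k j : ℕ) : ℝ)) = (d:ℝ) * m - ∑ j, (k j : ℝ) := by
      have := congrArg (fun n : ℕ => (n:ℝ)) hsum
      push_cast at this
      linarith
    have hcond : ((d:ℝ) * ν) * (m : ℝ) ≤ ξ + A * (∑ j, ((m - k j : ℕ) : ℝ)) := by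
      have hdν : (d:ℝ) * ν = (d:ℝ) * A + B := by
        rw [hν]; field_simp
      have hkn : knorm1 d k = ∑ j, (k j : ℝ) := rfl
      have hki : knormInf d k = (m : ℝ) := by
        rw [knormInf, ← hixs k]
      rw [hsumR, hdν]
      have hc := hk
      rw [Set.mem_setOf_eq, hkn, hki] at hc
      nlinarith
    rw [if_pos hcond]
    have h12 : ENNReal.ofReal (1/2 : ℝ) = (2:ℝ≥0∞)⁻¹ := by
      rw [one_div, ← ENNReal.ofReal_ofNat 2, ← ENNReal.ofReal_inv_of_pos two_pos]
    rw [h12, ← hsum, pow_add, mul_assoc, ← mul_pow]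
    rw [ENNReal.mul_inv_cancel two_ne_zero st13_two_ne_top, one_pow, mul_one]
  calc sum2E d {k | A * knorm1 d k + B * knormInf d k ≤ ξ}
      = ∑' x : {k : Fin d → ℕ | A * knorm1 d k + B * knormInf d k ≤ ξ}, g (Ψ x) := by
        rw [sum2E]; exact tsum_congr hterm
    _ ≤ ∑' p : (Fin d) × ((Fin d → ℕ) × ℕ), g p :=
        ENNReal.tsum_comp_le_tsum_of_injective hinj g

lemma st13_upper_neg (d : ℕ) (hd : 0 < d) (A B ν : ℝ) (hA : 0 < A) (hB : B < 0)
    (hν : ν = A + B) (hν0 : 0 < ν) :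
    ∃ K : ℝ≥0∞, K ≠ ∞ ∧ ∀ ξ : ℝ,
      sum2E d {k | A * knorm1 d k + B * knormInf d k ≤ ξ}
        ≤ K * (2:ℝ≥0∞) ^ (ξ / ν) := by
  have hνA : ν < A := by rw [hν]; linarith
  have hqlt : (2 : ℝ) * (2:ℝ) ^ (((1:ℕ):ℝ) * (-A) / ν) < 1 := by
    have hh : ((1:ℕ):ℝ) * (-A) / ν = -(A / ν) := by push_cast; ring
    rw [hh]
    have h1A : 1 < A / ν := (one_lt_div hν0).mpr hνA
    have h2 : (2:ℝ) ^ (-(A/ν)) < 2 ^ (-1 : ℝ) := by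
      apply Real.rpow_lt_rpow_of_exponent_lt one_lt_two
      linarith
    have h3 : (2:ℝ) ^ (-1 : ℝ) = 1/2 := by
      rw [Real.rpow_neg_one]; norm_num
    rw [h3] at h2
    linarith
  set K : ℝ≥0∞ := (d : ℝ≥0∞) * ((1 - (2:ℝ≥0∞) ^ (-((1:ℕ):ℝ)))⁻¹ *
      ((1 - ENNReal.ofReal ((2:ℝ) * (2:ℝ) ^ (((1:ℕ):ℝ) * (-A) / ν)))⁻¹) ^ d) with hK
  have hKtop : K ≠ ∞ := by
    rw [hK]
    apply ENNReal.mul_ne_top (ENNReal.natCast_ne_top d)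
    apply ENNReal.mul_ne_top
    · rw [ENNReal.inv_ne_top]
      have hlt : (2:ℝ≥0∞) ^ (-((1:ℕ):ℝ)) < 1 := by
        apply ENNReal.rpow_lt_one_of_one_lt_of_neg ENNReal.one_lt_two
        norm_num
      exact (tsub_pos_of_lt hlt).ne'
    · apply ENNReal.pow_ne_top
      rw [ENNReal.inv_ne_top]
      exact (tsub_pos_of_lt (ENNReal.ofReal_lt_one.mpr hqlt)).ne'
  refine ⟨K, hKtop, ?_⟩
  intro ξ
  have hcore := st13_upper_core d 1 one_pos ν (-A) 2 hν0 (by norm_num) ξ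
  have hxx : (((1:ℕ):ℝ) / ν) * ξ = ξ / ν := by push_cast; ring
  rw [hxx] at hcore
  refine le_trans ?_ hcore
  have hmax : ∀ k : Fin d → ℕ, ∃ i : Fin d, k i = Finset.univ.sup k := by
    intro k
    have hne : (Finset.univ : Finset (Fin d)).Nonempty := by
      have : Nonempty (Fin d) := ⟨⟨0, hd⟩⟩
      exact Finset.univ_nonempty
    obtain ⟨i, _, hi⟩ := Finset.exists_mem_eq_sup Finset.univ hne k
    exact ⟨i, hi.symm⟩
  set ix : (Fin d → ℕ) → Fin d := fun k => Classical.choose (hmax k) with hix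
  have hixs : ∀ k, k (ix k) = Finset.univ.sup k := fun k => Classical.choose_spec (hmax k)
  set g : (Fin d) × ((Fin d → ℕ) × ℕ) → ℝ≥0∞ := fun p =>
    (if ν * (p.2.2 : ℝ) ≤ ξ + (-A) * (∑ i, (p.2.1 i : ℝ)) then
        (2:ℝ≥0∞) ^ (1 * p.2.2) * (ENNReal.ofReal (2:ℝ)) ^ (∑ i, p.2.1 i) else 0)
    with hg
  set Ψ : {k : Fin d → ℕ | A * knorm1 d k + B * knormInf d k ≤ ξ}
      → (Fin d) × ((Fin d → ℕ) × ℕ) :=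
    fun x => (ix x.1, (Function.update x.1 (ix x.1) 0, x.1 (ix x.1))) with hΨ
  have hrec : ∀ k : Fin d → ℕ,
      Function.update (Function.update k (ix k) 0) (ix k) (k (ix k)) = k := by
    intro k
    rw [Function.update_idem, Function.update_eq_self]
  have hinj : Function.Injective Ψ := by
    intro x y hxy
    have hi : ix x.1 = ix y.1 := congrArg (fun p => p.1) hxy
    have h1 : x.1 (ix x.1) = y.1 (ix y.1) := congrArg (fun p => p.2.2) hxy
    have h2 : Function.update x.1 (ix x.1) 0 = Function.update y.1 (ix y.1) 0 :=
      congrArg (fun p => p.2.1) hxy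
    apply Subtype.ext
    rw [← hrec x.1, ← hrec y.1, h2, h1, hi]
  have hterm : ∀ x : {k : Fin d → ℕ | A * knorm1 d k + B * knormInf d k ≤ ξ},
      (2:ℝ≥0∞) ^ (∑ i, (x : Fin d → ℕ) i) = g (Ψ x) := by
    rintro ⟨k, hk⟩
    simp only [hΨ, hg]
    set m : ℕ := k (ix k) with hm
    have hsum : m + (∑ j, Function.update k (ix k) 0 j) = ∑ j, k j := by
      rw [Finset.sum_update_of_mem (Finset.mem_univ (ix k)), zero_add,
        ← Finset.sum_eq_add_sum_sdiff_singleton_of_mem (Finset.mem_univ (ix k))]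
    have hsumR : (∑ j, ((Function.update k (ix k) 0 j : ℕ) : ℝ))
        = (∑ j, (k j : ℝ)) - (m:ℝ) := by
      have := congrArg (fun n : ℕ => (n:ℝ)) hsum
      push_cast at this
      linarith
    have hcond : ν * (m : ℝ) ≤ ξ + (-A) * (∑ j, ((Function.update k (ix k) 0 j : ℕ) : ℝ)) := by
      have hkn : knorm1 d k = ∑ j, (k j : ℝ) := rfl
      have hki : knormInf d k = (m : ℝ) := by rw [knormInf, ← hixs k]
      have hc := hk
      rw [Set.mem_setOf_eq, hkn, hki] at hc
      rw [hsumR]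
      have hBν : B = ν - A := by rw [hν]; ring
      nlinarith
    rw [if_pos hcond]
    rw [ENNReal.ofReal_ofNat, one_mul, ← pow_add, hsum]
  calc sum2E d {k | A * knorm1 d k + B * knormInf d k ≤ ξ}
      = ∑' x : {k : Fin d → ℕ | A * knorm1 d k + B * knormInf d k ≤ ξ}, g (Ψ x) := by
        rw [sum2E]; exact tsum_congr hterm
    _ ≤ ∑' p : (Fin d) × ((Fin d → ℕ) × ℕ), g p :=
        ENNReal.tsum_comp_le_tsum_of_injective hinj g

lemma st13_lower_pos (d : ℕ) (hd : 0 < d) (A B ν : ℝ) (hA : 0 < A) (hB : 0 < B)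
    (hν : ν = A + B / d) :
    ∀ ξ : ℝ, 0 < ξ →
      ENNReal.ofReal ((2:ℝ) ^ (ξ / ν - d)) ≤
        sum2E d {k | A * knorm1 d k + B * knormInf d k ≤ ξ} := by
  intro ξ hξ
  have hd0 : (0:ℝ) < d := by exact_mod_cast hd
  have hν0 : 0 < ν := by rw [hν]; positivity
  set n : ℕ := ⌊ξ / ((d:ℝ) * ν)⌋₊ with hn
  set k₀ : Fin d → ℕ := fun _ => n with hk₀
  have hmem : k₀ ∈ {k | A * knorm1 d k + B * knormInf d k ≤ ξ} := by
    rw [Set.mem_setOf_eq]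
    have hne : (Finset.univ : Finset (Fin d)).Nonempty := by
      have : Nonempty (Fin d) := ⟨⟨0, hd⟩⟩
      exact Finset.univ_nonempty
    have h1 : knorm1 d k₀ = (d:ℝ) * n := by
      rw [knorm1]
      simp [hk₀, Finset.sum_const, Finset.card_univ, mul_comm]
    have h2 : knormInf d k₀ = (n:ℝ) := by
      rw [knormInf, hk₀]
      rw [Finset.sup_const hne]
    rw [h1, h2]
    have hfl : (n:ℝ) ≤ ξ / ((d:ℝ) * ν) := Nat.floor_le (by positivity)
    have h3 : ((d:ℝ) * ν) * n ≤ ξ := by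
      rw [← le_div_iff₀' (by positivity)]
      exact hfl
    have h4 : (d:ℝ) * ν = (d:ℝ) * A + B := by rw [hν]; field_simp
    nlinarith
  have hterm : ENNReal.ofReal ((2:ℝ) ^ (ξ / ν - d)) ≤ (2:ℝ≥0∞) ^ (∑ i, k₀ i) := by
    have hsn : (∑ i, k₀ i) = d * n := by
      simp [hk₀, Finset.sum_const, Finset.card_univ, mul_comm]
    have hlt : ξ / ν - d ≤ ((d * n : ℕ) : ℝ) := by
      have h5 : ξ / ((d:ℝ) * ν) < n + 1 := Nat.lt_floor_add_one _
      have h6 : ξ / ν = (d:ℝ) * (ξ / ((d:ℝ) * ν)) := by field_simp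
      push_cast
      rw [h6]
      nlinarith
    calc ENNReal.ofReal ((2:ℝ) ^ (ξ / ν - d))
        ≤ ENNReal.ofReal ((2:ℝ) ^ (((d * n : ℕ) : ℝ))) := by
          apply ENNReal.ofReal_le_ofReal
          exact Real.rpow_le_rpow_of_exponent_le one_le_two hlt
      _ = (2:ℝ≥0∞) ^ ((d * n : ℕ) : ℝ) := by
          rw [← ENNReal.ofReal_rpow_of_pos two_pos, ENNReal.ofReal_ofNat]
      _ = (2:ℝ≥0∞) ^ (d * n) := by rw [ENNReal.rpow_natCast]
      _ = (2:ℝ≥0∞) ^ (∑ i, k₀ i) := by rw [hsn]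
  calc ENNReal.ofReal ((2:ℝ) ^ (ξ / ν - d)) ≤ (2:ℝ≥0∞) ^ (∑ i, k₀ i) := hterm
    _ ≤ sum2E d {k | A * knorm1 d k + B * knormInf d k ≤ ξ} := by
        rw [sum2E]
        exact ENNReal.le_tsum (⟨k₀, hmem⟩ :
          {k : Fin d → ℕ | A * knorm1 d k + B * knormInf d k ≤ ξ})

lemma st13_lower_neg (d : ℕ) (hd : 0 < d) (A B ν : ℝ) (hA : 0 < A) (hB : B < 0)
    (hν : ν = A + B) (hν0 : 0 < ν) :
    ∀ ξ : ℝ, 0 < ξ →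
      ENNReal.ofReal ((2:ℝ) ^ (ξ / ν - d)) ≤
        sum2E d {k | A * knorm1 d k + B * knormInf d k ≤ ξ} := by
  intro ξ hξ
  have hd1 : (1:ℝ) ≤ d := by exact_mod_cast hd
  set n : ℕ := ⌊ξ / ν⌋₊ with hn
  set i₀ : Fin d := ⟨0, hd⟩ with hi₀
  set k₀ : Fin d → ℕ := fun j => if j = i₀ then n else 0 with hk₀
  have hsumn : (∑ i, k₀ i) = n := by
    rw [hk₀]
    rw [Finset.sum_ite_eq' Finset.univ i₀ (fun _ => n)]
    simp
  have hmem : k₀ ∈ {k | A * knorm1 d k + B * knormInf d k ≤ ξ} := by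
    rw [Set.mem_setOf_eq]
    have h1 : knorm1 d k₀ = (n:ℝ) := by
      rw [knorm1]
      have : (∑ i, (k₀ i : ℝ)) = ((∑ i, k₀ i : ℕ) : ℝ) := by push_cast; rfl
      rw [this, hsumn]
    have h2 : knormInf d k₀ = (n:ℝ) := by
      rw [knormInf]
      congr 1
      apply le_antisymm
      · apply Finset.sup_le
        intro j _
        rw [hk₀]
        by_cases hj : j = i₀ <;> simp [hj]
      · have := Finset.le_sup (f := k₀) (Finset.mem_univ i₀)
        simpa [hk₀] using this
    rw [h1, h2]
    have hfl : (n:ℝ) ≤ ξ / ν := Nat.floor_le (by positivity)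
    have h3 : ν * n ≤ ξ := by
      rw [← le_div_iff₀' hν0]
      exact hfl
    nlinarith [hν]
  have hterm : ENNReal.ofReal ((2:ℝ) ^ (ξ / ν - d)) ≤ (2:ℝ≥0∞) ^ (∑ i, k₀ i) := by
    have hlt : ξ / ν - d ≤ ((n : ℕ) : ℝ) := by
      have h5 : ξ / ν < n + 1 := Nat.lt_floor_add_one _
      push_cast
      linarith
    calc ENNReal.ofReal ((2:ℝ) ^ (ξ / ν - d))
        ≤ ENNReal.ofReal ((2:ℝ) ^ ((n : ℝ))) := by
          apply ENNReal.ofReal_le_ofReal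
          exact Real.rpow_le_rpow_of_exponent_le one_le_two hlt
      _ = (2:ℝ≥0∞) ^ ((n:ℕ) : ℝ) := by
          rw [← ENNReal.ofReal_rpow_of_pos two_pos, ENNReal.ofReal_ofNat]
      _ = (2:ℝ≥0∞) ^ (n:ℕ) := by rw [ENNReal.rpow_natCast]
      _ = (2:ℝ≥0∞) ^ (∑ i, k₀ i) := by rw [hsumn]
  calc ENNReal.ofReal ((2:ℝ) ^ (ξ / ν - d)) ≤ (2:ℝ≥0∞) ^ (∑ i, k₀ i) := hterm
    _ ≤ sum2E d {k | A * knorm1 d k + B * knormInf d k ≤ ξ} := by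
        rw [sum2E]
        exact ENNReal.le_tsum (⟨k₀, hmem⟩ :
          {k : Fin d → ℕ | A * knorm1 d k + B * knormInf d k ≤ ξ})

lemma st13_grid_lower (d : ℕ) (Δ : Set (Fin d → ℕ)) : sum2E d Δ ≤ gridSizeE d Δ := by
  rw [sum2E, gridSizeE]
  apply ENNReal.tsum_le_tsum
  intro k
  rw [← Finset.prod_pow_eq_pow_sum]
  apply Finset.prod_le_prod'
  intro i _
  exact le_add_right le_rfl

lemma st13_grid_upper (d : ℕ) (Δ : Set (Fin d → ℕ)) :
    gridSizeE d Δ ≤ (2:ℝ≥0∞) ^ d * sum2E d Δ := by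
  rw [sum2E, gridSizeE, ← ENNReal.tsum_mul_left]
  apply ENNReal.tsum_le_tsum
  intro k
  calc (∏ i, ((2:ℝ≥0∞) ^ ((k : Fin d → ℕ) i) + 1))
      ≤ ∏ i, (2 * (2:ℝ≥0∞) ^ ((k : Fin d → ℕ) i)) := by
        apply Finset.prod_le_prod'
        intro i _
        rw [two_mul]
        gcongr
        exact one_le_pow_of_one_le' one_le_two _
    _ = (2:ℝ≥0∞) ^ d * ∏ i, (2:ℝ≥0∞) ^ ((k : Fin d → ℕ) i) := by
        rw [Finset.prod_mul_distrib, Finset.prod_const, Finset.card_univ, Fintype.card_fin]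
    _ = (2:ℝ≥0∞) ^ d * (2:ℝ≥0∞) ^ (∑ i, (k : Fin d → ℕ) i) := by
        rw [Finset.prod_pow_eq_pow_sum]

lemma st13_assemble (d : ℕ) (hd : 0 < d) (ν : ℝ) (S : ℝ → Set (Fin d → ℕ))
    (K : ℝ≥0∞) (hK : K ≠ ∞)
    (hlow : ∀ ξ : ℝ, 0 < ξ → ENNReal.ofReal ((2:ℝ) ^ (ξ / ν - d)) ≤ sum2E d (S ξ))
    (hup : ∀ ξ : ℝ, sum2E d (S ξ) ≤ K * (2:ℝ≥0∞) ^ (ξ / ν)) :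
    ∃ C₁ > (0:ℝ), ∃ C₂ > (0:ℝ), ∀ ξ : ℝ, 0 < ξ →
      (ENNReal.ofReal (C₁ * (2:ℝ) ^ (ξ / ν)) ≤ gridSizeE d (S ξ) ∧
        gridSizeE d (S ξ) ≤ ENNReal.ofReal (C₂ * (2:ℝ) ^ (ξ / ν))) ∧
      (ENNReal.ofReal (C₁ * (2:ℝ) ^ (ξ / ν)) ≤ sum2E d (S ξ) ∧
        sum2E d (S ξ) ≤ ENNReal.ofReal (C₂ * (2:ℝ) ^ (ξ / ν))) := by
  refine ⟨(2:ℝ) ^ (-(d:ℝ)), by positivity, (K.toReal + 1) * 2 ^ d, by positivity, ?_⟩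
  intro ξ hξ
  have hC1 : ENNReal.ofReal ((2:ℝ) ^ (-(d:ℝ)) * (2:ℝ) ^ (ξ / ν))
      = ENNReal.ofReal ((2:ℝ) ^ (ξ / ν - d)) := by
    congr 1
    rw [← Real.rpow_add two_pos]
    congr 1
    ring
  have hlow' : ENNReal.ofReal ((2:ℝ) ^ (-(d:ℝ)) * (2:ℝ) ^ (ξ / ν)) ≤ sum2E d (S ξ) := by
    rw [hC1]; exact hlow ξ hξ
  have h2ξ : (2:ℝ≥0∞) ^ (ξ / ν) = ENNReal.ofReal ((2:ℝ) ^ (ξ / ν)) := by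
    rw [← ENNReal.ofReal_rpow_of_pos two_pos, ENNReal.ofReal_ofNat]
  have hup2 : ∀ M : ℝ≥0∞, M ≠ ∞ → sum2E d (S ξ) ≤ M * (2:ℝ≥0∞) ^ (ξ / ν) →
      sum2E d (S ξ) ≤ ENNReal.ofReal (M.toReal * (2:ℝ) ^ (ξ / ν)) := by
    intro M hM h
    refine le_trans h ?_
    rw [ENNReal.ofReal_mul ENNReal.toReal_nonneg, ENNReal.ofReal_toReal hM, ← h2ξ]
  have h1 : (1:ℝ) ≤ 2 ^ d := by exact_mod_cast Nat.one_le_two_pow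
  have h2 : (0:ℝ) < (2:ℝ) ^ (ξ / ν) := Real.rpow_pos_of_pos two_pos _
  have hupS : sum2E d (S ξ) ≤ ENNReal.ofReal ((K.toReal + 1) * 2 ^ d * (2:ℝ) ^ (ξ / ν)) := by
    refine le_trans (hup2 K hK (hup ξ)) ?_
    apply ENNReal.ofReal_le_ofReal
    have hKn := ENNReal.toReal_nonneg (a := K)
    have h5 : K.toReal ≤ (K.toReal + 1) * 2 ^ d := by nlinarith
    exact mul_le_mul_of_nonneg_right h5 h2.le
  have hupG : gridSizeE d (S ξ) ≤ ENNReal.ofReal ((K.toReal + 1) * 2 ^ d * (2:ℝ) ^ (ξ / ν)) := by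
    have hKK : (2:ℝ≥0∞) ^ d * K ≠ ∞ :=
      ENNReal.mul_ne_top (ENNReal.pow_ne_top st13_two_ne_top) hK
    have h4 : ((2:ℝ≥0∞) ^ d * K).toReal = 2 ^ d * K.toReal := by
      simp [ENNReal.toReal_mul, ENNReal.toReal_pow]
    calc gridSizeE d (S ξ) ≤ (2:ℝ≥0∞) ^ d * sum2E d (S ξ) := st13_grid_upper d (S ξ)
      _ ≤ ((2:ℝ≥0∞) ^ d * K) * (2:ℝ≥0∞) ^ (ξ / ν) := by
          rw [mul_assoc]
          exact mul_le_mul_right (hup ξ) _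
      _ = ENNReal.ofReal (((2:ℝ≥0∞) ^ d * K).toReal * (2:ℝ) ^ (ξ / ν)) := by
          rw [ENNReal.ofReal_mul ENNReal.toReal_nonneg, ENNReal.ofReal_toReal hKK, ← h2ξ]
      _ ≤ ENNReal.ofReal ((K.toReal + 1) * 2 ^ d * (2:ℝ) ^ (ξ / ν)) := by
          apply ENNReal.ofReal_le_ofReal
          rw [h4]
          have hKn := ENNReal.toReal_nonneg (a := K)
          have h5 : 2 ^ d * K.toReal ≤ (K.toReal + 1) * 2 ^ d := by nlinarith [pow_pos (two_pos (α := ℝ)) d]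
          exact mul_le_mul_of_nonneg_right h5 h2.le
  have hlowG : ENNReal.ofReal ((2:ℝ) ^ (-(d:ℝ)) * (2:ℝ) ^ (ξ / ν)) ≤ gridSizeE d (S ξ) :=
    le_trans hlow' (st13_grid_lower d (S ξ))
  exact ⟨⟨hlowG, hupG⟩, ⟨hlow', hupS⟩⟩

end Stmt13Aux

open SparseGrid MeasureTheory in
/-- `|G(Δ(ξ))| ≍ ∑_{k ∈ Δ(ξ)} 2^{|k|_1} ≍ 2^{ξ/ν}`, where
`ν = α + β/d - (1/p-1/q)_+` if `β > 0` and `ν = α + β - (1/p-1/q)_+` if `β < 0`. -/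
theorem statement13 (d r : ℕ) (hd : 0 < d) (hr : 0 < r)
    (p θ q : ℝ≥0∞) (hp : 0 < p) (hθ : 0 < θ) (hq : 0 < q)
    (α β : ℝ) (hα : 0 ≤ α) (hβ : β ≠ 0)
    (hlow : p⁻¹ < ENNReal.ofReal (min α (α + β))) (hhigh : max α (α + β) < (r : ℝ))
    (ε : ℝ) (hε0 : 0 < ε) (hε : ε < min (α - rhoPQ p q) |β|) :
    ∃ C₁ > (0:ℝ), ∃ C₂ > (0:ℝ), ∀ ξ : ℝ, 0 < ξ →
      (ENNReal.ofReal (C₁ * (2:ℝ) ^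
          (ξ / (if 0 < β then α + β / d - rhoPQ p q else α + β - rhoPQ p q))) ≤
        gridSizeE d (DeltaAB d p θ q α β ε ξ) ∧
      gridSizeE d (DeltaAB d p θ q α β ε ξ) ≤
        ENNReal.ofReal (C₂ * (2:ℝ) ^
          (ξ / (if 0 < β then α + β / d - rhoPQ p q else α + β - rhoPQ p q)))) ∧
      (ENNReal.ofReal (C₁ * (2:ℝ) ^
          (ξ / (if 0 < β then α + β / d - rhoPQ p q else α + β - rhoPQ p q))) ≤
        sum2E d (DeltaAB d p θ q α β ε ξ) ∧
      sum2E d (DeltaAB d p θ q α β ε ξ) ≤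
        ENNReal.ofReal (C₂ * (2:ℝ) ^
          (ξ / (if 0 < β then α + β / d - rhoPQ p q else α + β - rhoPQ p q)))) := by
  classical
  have hεα : ε < α - rhoPQ p q := lt_of_lt_of_le hε (min_le_left _ _)
  obtain hb | hb := lt_or_gt_of_ne hβ
  · -- β < 0
    have hb' : ¬ (0 < β) := not_lt.mpr hb.le
    have hεβ : ε < -β := by
      have := lt_of_lt_of_le hε (min_le_right _ _)
      rwa [abs_of_neg hb] at this
    have hν0 : 0 < α + β - rhoPQ p q := by
      have hmin : min α (α + β) = α + β := min_eq_right (by linarith)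
      have h1 : p⁻¹ < ENNReal.ofReal (α + β) := by rwa [hmin] at hlow
      have h2 : p⁻¹ ≠ ∞ := ne_top_of_lt (lt_of_lt_of_le h1 le_top)
      have h3 : p⁻¹.toReal < α + β := by
        have h4 : 0 < α + β := by
          by_contra h5
          rw [ENNReal.ofReal_eq_zero.mpr (not_lt.mp h5)] at h1
          exact absurd h1 (by simp)
        exact (ENNReal.lt_ofReal_iff_toReal_lt h2).mp h1
      have h5 : rhoPQ p q ≤ p⁻¹.toReal := by
        rw [rhoPQ]
        apply max_le (ENNReal.toReal_nonneg)
        have := ENNReal.toReal_nonneg (a := q⁻¹)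
        linarith
      linarith
    simp only [if_neg hb']
    by_cases hTA : tripleA p θ q
    · have hset : ∀ ξ : ℝ, DeltaAB d p θ q α β ε ξ =
          {k | (α - rhoPQ p q) * knorm1 d k + β * knormInf d k ≤ ξ} := by
        intro ξ; rw [DeltaAB, if_pos hTA]
      simp only [hset]
      obtain ⟨K, hKt, hKu⟩ := st13_upper_neg d hd (α - rhoPQ p q) β
        (α + β - rhoPQ p q) (by linarith) hb (by ring) hν0
      exact st13_assemble d hd (α + β - rhoPQ p q)
        (fun ξ => {k | (α - rhoPQ p q) * knorm1 d k + β * knormInf d k ≤ ξ}) K hKt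
        (st13_lower_neg d hd (α - rhoPQ p q) β (α + β - rhoPQ p q)
          (by linarith) hb (by ring) hν0) hKu
    · have hset : ∀ ξ : ℝ, DeltaAB d p θ q α β ε ξ =
          {k | (α - rhoPQ p q - ε) * knorm1 d k + (β + ε) * knormInf d k ≤ ξ} := by
        intro ξ; rw [DeltaAB, if_neg hTA, if_neg hb']
      simp only [hset]
      obtain ⟨K, hKt, hKu⟩ := st13_upper_neg d hd (α - rhoPQ p q - ε) (β + ε)
        (α + β - rhoPQ p q) (by linarith) (by linarith) (by ring) hν0
      exact st13_assemble d hd (α + β - rhoPQ p q)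
        (fun ξ => {k | (α - rhoPQ p q - ε) * knorm1 d k + (β + ε) * knormInf d k ≤ ξ}) K hKt
        (st13_lower_neg d hd (α - rhoPQ p q - ε) (β + ε) (α + β - rhoPQ p q)
          (by linarith) (by linarith) (by ring) hν0) hKu
  · -- β > 0
    have hεβ : ε < β := by
      have := lt_of_lt_of_le hε (min_le_right _ _)
      rwa [abs_of_pos hb] at this
    have hd0 : (0:ℝ) < d := by exact_mod_cast hd
    simp only [if_pos hb]
    by_cases hTA : tripleA p θ q
    · have hset : ∀ ξ : ℝ, DeltaAB d p θ q α β ε ξ =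
          {k | (α - rhoPQ p q) * knorm1 d k + β * knormInf d k ≤ ξ} := by
        intro ξ; rw [DeltaAB, if_pos hTA]
      simp only [hset]
      obtain ⟨K, hKt, hKu⟩ := st13_upper_pos d hd (α - rhoPQ p q) β
        (α + β / d - rhoPQ p q) (by linarith) hb (by ring)
      exact st13_assemble d hd (α + β / d - rhoPQ p q)
        (fun ξ => {k | (α - rhoPQ p q) * knorm1 d k + β * knormInf d k ≤ ξ}) K hKt
        (st13_lower_pos d hd (α - rhoPQ p q) β (α + β / d - rhoPQ p q)
          (by linarith) hb (by ring)) hKu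
    · have hset : ∀ ξ : ℝ, DeltaAB d p θ q α β ε ξ =
          {k | (α - rhoPQ p q + ε / d) * knorm1 d k + (β - ε) * knormInf d k ≤ ξ} := by
        intro ξ; rw [DeltaAB, if_neg hTA, if_pos hb]
      simp only [hset]
      have hA' : 0 < α - rhoPQ p q + ε / d := by
        have : 0 < ε / d := div_pos hε0 hd0
        linarith
      obtain ⟨K, hKt, hKu⟩ := st13_upper_pos d hd (α - rhoPQ p q + ε / d) (β - ε)
        (α + β / d - rhoPQ p q) hA' (by linarith) (by field_simp; ring)
      exact st13_assemble d hd (α + β / d - rhoPQ p q)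
        (fun ξ => {k | (α - rhoPQ p q + ε / d) * knorm1 d k + (β - ε) * knormInf d k ≤ ξ}) K hKt
        (st13_lower_pos d hd (α - rhoPQ p q + ε / d) (β - ε) (α + β / d - rhoPQ p q)
          hA' (by linarith) (by field_simp; ring)) hKu
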